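/- Let k be a perfect field of characteristic p and (A, φ) a k-algebra with Frobenius splitting φ. Then the twisted Witt ring W_2^φ(A) is a flat W_2(k)-algebra, and the first projection induces an isomorphism W_2^φ(A)/p·W_2^φ(A) ≅ A; i.e., W_2^φ(A) is a flat lifting of A to W_2(k). -/

import Mathlib

/-- A type-level copy of `A × A`, the underlying set of twisted Witt vectors. -/
structure WittPair (A : Type*) where
  fst : A
  snd : A

/-- The value in `A` of the integral polynomial `P(a,b) = ((a+b)^p − a^p − b^p)/p`,
written via binomial coefficients: `P(a,b) = Σ_{0<i<p} (C(p,i)/p) a^i b^{p-i}`. -/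
def wittP (p : ℕ) {A : Type*} [CommRing A] (a b : A) : A :=
  ∑ i ∈ Finset.Ioo 0 p, ((p.choose i / p : ℕ) : A) * a ^ i * b ^ (p - i)

/-- `inst` is the twisted Witt ring structure `W₂^φ(A)` on `A × A`. -/
def IsTwistedWittRing {A : Type*} [CommRing A] (p : ℕ) (φ : A → A)
    (inst : CommRing (WittPair A)) : Prop :=
  letI := inst
  (∀ x y : WittPair A,
      x + y = ⟨x.fst + y.fst, x.snd + y.snd - φ (wittP p x.fst y.fst)⟩) ∧
  (∀ x y : WittPair A,
      x * y = ⟨x.fst * y.fst, x.fst * y.snd + y.fst * x.snd⟩) ∧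
  (1 : WittPair A) = ⟨1, 0⟩

namespace TwistedWittAux

open MvPolynomial Finset

variable (p : ℕ) [hp : Fact p.Prime]

/-- The integral polynomial `P(X,Y)` in variables `X=(0,0)`, `Y=(1,0)`. -/
noncomputable def pPoly : MvPolynomial (Fin 2 × ℕ) ℤ :=
  ∑ i ∈ Finset.Ioo 0 p, (C ((p.choose i / p : ℕ) : ℤ)) * X (0,0) ^ i * X (1,0) ^ (p - i)

omit hp in
lemma range_eq_insert (h0 : 0 < p) : Finset.range p = insert 0 (Finset.Ioo 0 p) := by
  ext i
  simp only [Finset.mem_range, Finset.mem_insert, Finset.mem_Ioo]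
  omega

lemma C_p_mul_pPoly :
    C (p : ℤ) * pPoly p
      = (X (0,0) + X (1,0)) ^ p - X (0,0) ^ p - X ((1 : Fin 2),(0 : ℕ)) ^ p := by
  have h0 : 0 < p := hp.out.pos
  rw [add_pow, Finset.sum_range_succ, range_eq_insert p h0, Finset.sum_insert (by simp)]
  rw [pPoly, Finset.mul_sum]
  rw [Finset.sum_congr rfl (fun i hi => ?_)]
  · simp only [Nat.sub_self, pow_zero, Nat.choose_self, Nat.cast_one, mul_one, pow_zero,
      Nat.choose_zero_right, one_mul, Nat.sub_zero]
    ring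
  · simp only [Finset.mem_Ioo] at hi
    have hd : p ∣ p.choose i := hp.out.dvd_choose_self (by omega) hi.2
    have hc : (p:ℤ) * ((p.choose i / p : ℕ) : ℤ) = (p.choose i : ℤ) := by
      exact_mod_cast congrArg (Nat.cast : ℕ → ℤ) (Nat.mul_div_cancel' hd)
    have h2 : C (p:ℤ) * C (((p.choose i / p : ℕ)) : ℤ)
        = ((p.choose i : ℕ) : MvPolynomial (Fin 2 × ℕ) ℤ) := by
      rw [← C_mul, hc]; simp
    linear_combination (X ((0:Fin 2),(0:ℕ)) ^ i * X ((1:Fin 2),(0:ℕ)) ^ (p - i)) * h2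

lemma C_p_ne_zero : (C (p : ℤ) : MvPolynomial (Fin 2 × ℕ) ℤ) ≠ 0 := by
  simp only [ne_eq, MvPolynomial.C_eq_zero]
  exact_mod_cast hp.out.ne_zero

lemma wittAdd_one :
    WittVector.wittAdd p 1 = X (0,1) + X (1,1) - pPoly p := by
  have hdef : WittVector.wittAdd p = wittStructureInt p (X 0 + X 1) := rfl
  have key := wittStructureInt_prop p (X (0 : Fin 2) + X 1) 1
  rw [← hdef] at key
  rw [wittPolynomial_one] at key
  simp only [map_add, map_mul, map_pow, bind₁_X_right, bind₁_C_right, rename_X, algHom_C,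
    rename_C, MvPolynomial.algebraMap_eq] at key
  rw [show WittVector.wittAdd p 0 = X (0,0) + X (1,0) from WittVector.wittAdd_zero p] at key
  refine mul_left_cancel₀ (C_p_ne_zero p) ?_
  linear_combination key + C_p_mul_pPoly p

lemma wittMul_one :
    WittVector.wittMul p 1 = X (0,0) ^ p * X (1,1) + X (1,0) ^ p * X (0,1)
      + C (p : ℤ) * (X (0,1) * X (1,1)) := by
  have hdef : WittVector.wittMul p = wittStructureInt p (X 0 * X 1) := rfl
  have key := wittStructureInt_prop p (X (0 : Fin 2) * X 1) 1
  rw [← hdef] at key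
  rw [wittPolynomial_one] at key
  simp only [map_add, map_mul, map_pow, bind₁_X_right, bind₁_C_right, rename_X, algHom_C,
    rename_C, MvPolynomial.algebraMap_eq] at key
  rw [show WittVector.wittMul p 0 = X (0,0) * X (1,0) from WittVector.wittMul_zero p] at key
  refine mul_left_cancel₀ (C_p_ne_zero p) ?_
  linear_combination key

variable {B' : Type*} [CommRing B']

lemma wv_add_coeff_one (x y : WittVector p B') :
    (x + y).coeff 1 = x.coeff 1 + y.coeff 1 - wittP p (x.coeff 0) (y.coeff 0) := by
  rw [WittVector.add_coeff, wittAdd_one, WittVector.peval]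
  simp only [map_sub, map_add, map_sum, map_mul, map_pow, aeval_X, aeval_C, pPoly, wittP,
    Function.uncurry, Matrix.cons_val_zero, Matrix.cons_val_one, Matrix.head_cons,
    algebraMap_int_eq, eq_intCast, Int.cast_natCast, map_natCast]

lemma wv_mul_coeff_one (x y : WittVector p B') :
    (x * y).coeff 1 = x.coeff 0 ^ p * y.coeff 1 + y.coeff 0 ^ p * x.coeff 1
      + (p : B') * (x.coeff 1 * y.coeff 1) := by
  rw [WittVector.mul_coeff, wittMul_one, WittVector.peval]
  simp only [map_add, map_mul, map_pow, aeval_X, aeval_C, Function.uncurry,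
    Matrix.cons_val_zero, Matrix.cons_val_one, Matrix.head_cons,
    algebraMap_int_eq, eq_intCast, Int.cast_natCast, map_natCast]

lemma t_add0 (x y : TruncatedWittVector p 2 B') :
    (x + y).coeff 0 = x.coeff 0 + y.coeff 0 := by
  obtain ⟨x, rfl⟩ := WittVector.truncate_surjective p 2 B' x
  obtain ⟨y, rfl⟩ := WittVector.truncate_surjective p 2 B' y
  rw [← map_add]
  simp only [WittVector.coeff_truncate]
  exact WittVector.add_coeff_zero x y

lemma t_add1 (x y : TruncatedWittVector p 2 B') :
    (x + y).coeff 1 = x.coeff 1 + y.coeff 1 - wittP p (x.coeff 0) (y.coeff 0) := by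
  obtain ⟨x, rfl⟩ := WittVector.truncate_surjective p 2 B' x
  obtain ⟨y, rfl⟩ := WittVector.truncate_surjective p 2 B' y
  rw [← map_add]
  simp only [WittVector.coeff_truncate]
  exact wv_add_coeff_one p x y

lemma t_mul0 (x y : TruncatedWittVector p 2 B') :
    (x * y).coeff 0 = x.coeff 0 * y.coeff 0 := by
  obtain ⟨x, rfl⟩ := WittVector.truncate_surjective p 2 B' x
  obtain ⟨y, rfl⟩ := WittVector.truncate_surjective p 2 B' y
  rw [← map_mul]
  simp only [WittVector.coeff_truncate]
  exact WittVector.mul_coeff_zero x y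

lemma t_mul1 (x y : TruncatedWittVector p 2 B') :
    (x * y).coeff 1 = x.coeff 0 ^ p * y.coeff 1 + y.coeff 0 ^ p * x.coeff 1
      + (p : B') * (x.coeff 1 * y.coeff 1) := by
  obtain ⟨x, rfl⟩ := WittVector.truncate_surjective p 2 B' x
  obtain ⟨y, rfl⟩ := WittVector.truncate_surjective p 2 B' y
  rw [← map_mul]
  simp only [WittVector.coeff_truncate]
  exact wv_mul_coeff_one p x y

lemma t_one0 : (1 : TruncatedWittVector p 2 B').coeff 0 = 1 := by
  rw [← map_one (WittVector.truncate 2 (p := p) (R := B')), WittVector.coeff_truncate]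
  exact WittVector.one_coeff_zero p B'

lemma t_one1 : (1 : TruncatedWittVector p 2 B').coeff 1 = 0 := by
  rw [← map_one (WittVector.truncate 2 (p := p) (R := B')), WittVector.coeff_truncate]
  exact WittVector.one_coeff_eq_of_pos p B' 1 one_pos

set_option linter.unusedSectionVars false in
lemma t_ext {x y : TruncatedWittVector p 2 B'}
    (h0 : x.coeff 0 = y.coeff 0) (h1 : x.coeff 1 = y.coeff 1) : x = y := by
  apply TruncatedWittVector.ext
  intro i
  fin_cases i <;> assumption

lemma sumN_succ :
    (∑ m ∈ Finset.range p, ∑ i ∈ Finset.Ioo 0 p, p.choose i / p * m ^ i) + 1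
      = p ^ (p - 1) := by
  have h0 : 0 < p := hp.out.pos
  have hbin : ∀ m : ℕ, (m + 1) ^ p
      = (∑ i ∈ Finset.Ioo 0 p, m ^ i * p.choose i) + (m ^ p + 1) := by
    intro m
    rw [add_pow, Finset.sum_range_succ]
    rw [range_eq_insert p h0, Finset.sum_insert (by simp)]
    simp only [pow_zero, one_pow, one_mul, mul_one, Nat.choose_zero_right, Nat.choose_self,
      Nat.sub_zero, Nat.sub_self, Nat.cast_id]
    ring
  have htel : ∑ m ∈ Finset.range (p + 1), m ^ p
      = (∑ m ∈ Finset.range p, (m + 1) ^ p) + 0 ^ p := Finset.sum_range_succ' _ p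
  rw [Finset.sum_range_succ, zero_pow h0.ne', add_zero] at htel
  have hsum : ∑ m ∈ Finset.range p, (m + 1) ^ p
      = (∑ m ∈ Finset.range p, ∑ i ∈ Finset.Ioo 0 p, m ^ i * p.choose i)
        + ((∑ m ∈ Finset.range p, m ^ p) + p) := by
    rw [Finset.sum_congr rfl (fun m _ => hbin m), Finset.sum_add_distrib,
      Finset.sum_add_distrib, Finset.sum_const, Finset.card_range, smul_eq_mul, mul_one]
  have hmul : p * (∑ m ∈ Finset.range p, ∑ i ∈ Finset.Ioo 0 p, p.choose i / p * m ^ i)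
      = ∑ m ∈ Finset.range p, ∑ i ∈ Finset.Ioo 0 p, m ^ i * p.choose i := by
    rw [Finset.mul_sum]
    refine Finset.sum_congr rfl (fun m _ => ?_)
    rw [Finset.mul_sum]
    refine Finset.sum_congr rfl (fun i hi => ?_)
    simp only [Finset.mem_Ioo] at hi
    rw [← mul_assoc, Nat.mul_div_cancel' (hp.out.dvd_choose_self hi.1.ne' hi.2), mul_comm]
  have h3 : (∑ m ∈ Finset.range p, m ^ p) + p ^ p
      = (∑ m ∈ Finset.range p, m ^ p)
        + ((∑ m ∈ Finset.range p, ∑ i ∈ Finset.Ioo 0 p, m ^ i * p.choose i) + p) := by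
    rw [htel, hsum]; ring
  have h4 := Nat.add_left_cancel h3
  have hpp : p ^ p = p * p ^ (p - 1) := by
    have h5 : p ^ (p - 1) * p = p ^ (p - 1 + 1) := (pow_succ p (p - 1)).symm
    rw [Nat.sub_add_cancel h0] at h5
    rw [← h5]; ring
  have key : p * ((∑ m ∈ Finset.range p, ∑ i ∈ Finset.Ioo 0 p, p.choose i / p * m ^ i) + 1)
      = p * p ^ (p - 1) := by
    rw [Nat.mul_add, hmul, mul_one, ← hpp, h4]
  exact Nat.eq_of_mul_eq_mul_left h0 key

lemma cast_p_coords {S B : Type*} [CommRing S] [CommRing B]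
    (hp0 : (p : B) = 0) (c₀ c₁ : S → B) (g : B → B → B)
    (h1₀ : c₀ 1 = 1) (h1₁ : c₁ 1 = 0)
    (hadd₀ : ∀ x y : S, c₀ (x + y) = c₀ x + c₀ y)
    (hadd₁ : ∀ x y : S, c₁ (x + y) = c₁ x + c₁ y - g (c₀ x) (c₀ y))
    (hg : ∀ m : ℕ, g (m : B) 1 = ((∑ i ∈ Finset.Ioo 0 p, p.choose i / p * m ^ i : ℕ) : B))
    (hg0 : g 0 0 = 0) :
    c₀ (p : S) = 0 ∧ c₁ (p : S) = 1 := by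
  have hc00 : c₀ 0 = 0 := by
    have h := hadd₀ 0 0; rw [add_zero] at h; exact (left_eq_add.mp h)
  have hc10 : c₁ 0 = 0 := by
    have h := hadd₁ 0 0
    rw [add_zero, hc00, hg0, sub_zero] at h
    exact (left_eq_add.mp h)
  have main : ∀ n : ℕ, c₀ (n : S) = (n : B) ∧
      c₁ (n : S) = -((∑ m ∈ Finset.range n, ∑ i ∈ Finset.Ioo 0 p,
        p.choose i / p * m ^ i : ℕ) : B) := by
    intro n
    induction n with
    | zero => simpa using ⟨hc00, hc10⟩
    | succ n ih =>
      rw [Nat.cast_succ]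
      constructor
      · rw [hadd₀, ih.1, h1₀, Nat.cast_succ]
      · rw [hadd₁, ih.2, h1₁, ih.1, h1₀, hg, Finset.sum_range_succ]
        push_cast
        ring
  refine ⟨(main p).1.trans hp0, ?_⟩
  rw [(main p).2]
  have h2 : (2 : ℕ) ≤ p := hp.out.two_le
  have e1 : ((∑ m ∈ Finset.range p, ∑ i ∈ Finset.Ioo 0 p,
      p.choose i / p * m ^ i : ℕ) : B) = ((p ^ (p - 1) : ℕ) : B) - 1 := by
    rw [← sumN_succ p]; push_cast; ring
  have e2 : ((p ^ (p - 1) : ℕ) : B) = 0 := by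
    push_cast
    rw [hp0, zero_pow (by omega)]
  rw [e1, e2]; ring

omit hp in
lemma wittP_natCast (B : Type*) [CommRing B] (m : ℕ) :
    wittP p (m : B) 1
      = ((∑ i ∈ Finset.Ioo 0 p, p.choose i / p * m ^ i : ℕ) : B) := by
  rw [wittP, Nat.cast_sum]
  exact Finset.sum_congr rfl fun i _ => by push_cast; ring

omit hp in
lemma wittP_zero (B : Type*) [CommRing B] : wittP p (0 : B) 0 = 0 := by
  rw [wittP]
  refine Finset.sum_eq_zero fun i hi => ?_
  rw [Finset.mem_Ioo] at hi
  rw [zero_pow hi.1.ne']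
  ring

omit hp in
lemma wittP_algebraMap {B C : Type*} [CommRing B] [CommRing C] (ι : B →+* C) (a b : B) :
    wittP p (ι a) (ι b) = ι (wittP p a b) := by
  rw [wittP, wittP, map_sum]
  exact Finset.sum_congr rfl fun i _ => by rw [map_mul, map_mul, map_pow, map_pow, map_natCast]

end TwistedWittAux

open TwistedWittAux TensorProduct

set_option maxHeartbeats 1000000 in
/-- For a perfect field `k` of characteristic `p` and a `k`-algebra `A` with a
Frobenius splitting `φ`, the twisted Witt ring `W₂^φ(A)` is a flat
`W₂(k)`-algebra and the first projection induces `W₂^φ(A)/p ≅ A`; i.e.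
`W₂^φ(A)` is a flat lifting of `A` to `W₂(k)`. -/
theorem twistedWittRing_flat_lifting
    (p : ℕ) [Fact p.Prime] (k : Type) [Field k] [CharP k p]
    [ExpChar k p] [PerfectRing k p]
    (A : Type) [CommRing A] [Algebra k A]
    (φ : A → A) (haddφ : ∀ a b : A, φ (a + b) = φ a + φ b)
    (hsemilinear : ∀ a b : A, φ (a ^ p * b) = a * φ b)
    (hsplit : ∀ a : A, φ (a ^ p) = a)
    (inst : CommRing (WittPair A)) (hinst : IsTwistedWittRing p φ inst) :
    letI := inst
    ∃ alg : Algebra (TruncatedWittVector p 2 k) (WittPair A),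
      letI := alg
      Module.Flat (TruncatedWittVector p 2 k) (WittPair A) ∧
      ∃ π : WittPair A →+* A,
        (∀ x : WittPair A, π x = x.fst) ∧
        RingHom.ker π = Ideal.span {(p : WittPair A)} := by
  letI := inst
  obtain ⟨hadd, hmul, hone⟩ := hinst
  let ι : k →+* A := algebraMap k A
  let r : k ≃+* k := (frobeniusEquiv k p).symm
  have hr_pow : ∀ a : k, r (a ^ p) = a := by
    intro a
    have h := frobeniusEquiv_apply k p a
    rw [frobenius_def] at h
    rw [← h]
    exact (frobeniusEquiv k p).symm_apply_apply a
  have hpow_r : ∀ a : k, (r a) ^ p = a := by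
    intro a
    have h := frobeniusEquiv_apply k p (r a)
    rw [frobenius_def] at h
    rw [← h]
    exact (frobeniusEquiv k p).apply_symm_apply a
  have hp0k : (p : k) = 0 := CharP.cast_eq_zero k p
  have hp0A : (p : A) = 0 := by
    rw [← map_natCast ι p, hp0k, map_zero]
  -- basic facts about φ
  have hφ0 : φ 0 = 0 := by
    have h := haddφ 0 0
    rw [add_zero] at h
    exact (left_eq_add.mp h)
  have hφ1 : φ 1 = 1 := by
    have := hsplit 1
    rwa [one_pow] at this
  have hφnat : ∀ n : ℕ, φ (n : A) = (n : A) := by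
    intro n
    induction n with
    | zero => simpa using hφ0
    | succ n ih => rw [Nat.cast_succ, haddφ, ih, hφ1]
  have hφalg : ∀ c : k, φ (ι c) = ι (r c) := by
    intro c
    have h : ι c = (ι (r c)) ^ p := by rw [← map_pow, hpow_r]
    rw [h, hsplit]
  -- basic facts about the twisted Witt ring
  have Wzero : (0 : WittPair A) = ⟨0, 0⟩ := by
    have e := hadd 0 0
    rw [add_zero] at e
    have e0 : (0 : WittPair A).fst = (0 : WittPair A).fst + (0 : WittPair A).fst :=
      congrArg WittPair.fst e
    have hf : (0 : WittPair A).fst = 0 := left_eq_add.mp e0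
    have e1 : (0 : WittPair A).snd
        = (0 : WittPair A).snd + (0 : WittPair A).snd
          - φ (wittP p (0 : WittPair A).fst (0 : WittPair A).fst) :=
      congrArg WittPair.snd e
    rw [hf, wittP_zero, hφ0, sub_zero] at e1
    have hs : (0 : WittPair A).snd = 0 := left_eq_add.mp e1
    have he : (0 : WittPair A) = ⟨(0 : WittPair A).fst, (0 : WittPair A).snd⟩ := rfl
    rw [he, hf, hs]
  -- p in the twisted Witt ring
  have hpW : (p : WittPair A) = ⟨0, 1⟩ := by
    have h1f : (1 : WittPair A).fst = 1 := by rw [hone]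
    have h1s : (1 : WittPair A).snd = 0 := by rw [hone]
    obtain ⟨e0, e1⟩ := cast_p_coords p (S := WittPair A) (B := A) hp0A
      (fun x => x.fst) (fun x => x.snd) (fun a b => φ (wittP p a b))
      h1f h1s
      (fun x y => congrArg WittPair.fst (hadd x y))
      (fun x y => congrArg WittPair.snd (hadd x y))
      (fun m => by
        show φ (wittP p ((m : ℕ) : A) 1) = _
        rw [wittP_natCast, hφnat])
      (by show φ (wittP p (0 : A) 0) = 0
          rw [wittP_zero, hφ0])
    have he : (p : WittPair A) = ⟨(p : WittPair A).fst, (p : WittPair A).snd⟩ := rfl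
    rw [he, e0, e1]
  -- p in the truncated Witt vectors
  obtain ⟨hpR0, hpR1⟩ := cast_p_coords p (S := TruncatedWittVector p 2 k) (B := k) hp0k
    (fun x => x.coeff 0) (fun x => x.coeff 1) (fun a b => wittP p a b)
    (t_one0 p) (t_one1 p) (t_add0 p) (t_add1 p)
    (fun m => wittP_natCast p k m) (wittP_zero p k)
  have hpsq : (p : TruncatedWittVector p 2 k) * (p : TruncatedWittVector p 2 k) = 0 := by
    refine t_ext p ?_ ?_
    · rw [t_mul0, hpR0, mul_zero, TruncatedWittVector.coeff_zero]
    · rw [t_mul1, hpR0, hpR1, TruncatedWittVector.coeff_zero, hp0k]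
      rw [zero_pow (Fact.out (p := p.Prime)).ne_zero]
      ring
  -- the structure ring homomorphism f
  let f : TruncatedWittVector p 2 k →+* WittPair A :=
    { toFun := fun x => ⟨ι (x.coeff 0), ι (r (x.coeff 1))⟩
      map_one' := by
        show (⟨ι ((1 : TruncatedWittVector p 2 k).coeff 0),
          ι (r ((1 : TruncatedWittVector p 2 k).coeff 1))⟩ : WittPair A) = 1
        rw [t_one0, t_one1, map_zero, map_zero, map_one, hone]
      map_mul' := fun x y => by
        show (⟨ι ((x * y).coeff 0), ι (r ((x * y).coeff 1))⟩ : WittPair A) = _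
        rw [hmul]
        refine congrArg₂ WittPair.mk ?_ ?_
        · rw [t_mul0, map_mul]
        · rw [t_mul1, hp0k, zero_mul, add_zero, map_add, map_mul, map_mul, hr_pow,
            hr_pow, map_add, map_mul, map_mul]
      map_zero' := by
        show (⟨ι ((0 : TruncatedWittVector p 2 k).coeff 0),
          ι (r ((0 : TruncatedWittVector p 2 k).coeff 1))⟩ : WittPair A) = 0
        rw [TruncatedWittVector.coeff_zero, TruncatedWittVector.coeff_zero, map_zero,
          map_zero, map_zero, Wzero]
      map_add' := fun x y => by
        show (⟨ι ((x + y).coeff 0), ι (r ((x + y).coeff 1))⟩ : WittPair A) = _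
        rw [hadd]
        refine congrArg₂ WittPair.mk ?_ ?_
        · rw [t_add0, map_add]
        · rw [t_add1, wittP_algebraMap, hφalg, map_sub, map_add, map_sub, map_add] }
  letI alg : Algebra (TruncatedWittVector p 2 k) (WittPair A) := f.toAlgebra
  have hsmul : ∀ (c : TruncatedWittVector p 2 k) (m : WittPair A), c • m = f c * m :=
    fun c m => by rw [Algebra.smul_def, RingHom.algebraMap_toAlgebra]
  have hfp : f (p : TruncatedWittVector p 2 k) = (p : WittPair A) := map_natCast f p
  have hpsmul : ∀ m : WittPair A, (p : TruncatedWittVector p 2 k) • m = ⟨0, m.fst⟩ := by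
    intro m
    rw [hsmul, hfp, hpW, hmul]
    show (⟨0 * m.fst, 0 * m.snd + m.fst * 1⟩ : WittPair A) = _
    rw [zero_mul, zero_mul, zero_add, mul_one]
  refine ⟨alg, ?_, ?_⟩
  · -- flatness
    rw [Module.Flat.iff_rTensor_injective']
    intro I
    by_cases hcase1 : ∃ x ∈ I, x.coeff 0 ≠ 0
    · -- I = ⊤
      obtain ⟨x, hxI, hx0⟩ := hcase1
      have hxu : IsUnit x := by
        refine IsUnit.of_mul_eq_one (a := x)
          (TruncatedWittVector.mk p ![(x.coeff 0)⁻¹, -((x.coeff 0) ^ (2 * p))⁻¹ * x.coeff 1]) ?_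
        refine t_ext p ?_ ?_
        · rw [t_mul0, TruncatedWittVector.coeff_mk, t_one0]
          simp [mul_inv_cancel₀ hx0]
        · rw [t_mul1, TruncatedWittVector.coeff_mk, TruncatedWittVector.coeff_mk, t_one1, hp0k]
          simp only [Matrix.cons_val_zero, Matrix.cons_val_one, Matrix.head_cons, zero_mul,
            add_zero]
          field_simp
          linear_combination (x.coeff 1 * x.coeff 0 ^ p) * mul_inv_cancel₀ (pow_ne_zero p hx0)
      have hIT : I = ⊤ := Ideal.eq_top_of_isUnit_mem I hxI hxu
      rw [hIT]
      let s : TruncatedWittVector p 2 k →ₗ[TruncatedWittVector p 2 k]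
          (⊤ : Ideal (TruncatedWittVector p 2 k)) :=
        LinearMap.codRestrict (⊤ : Ideal (TruncatedWittVector p 2 k))
          LinearMap.id (fun _ => trivial)
      have hss : s ∘ₗ (Submodule.subtype (⊤ : Ideal (TruncatedWittVector p 2 k)))
          = LinearMap.id := by
        apply LinearMap.ext
        intro u
        apply Subtype.ext
        rfl
      have hkey : ∀ u : (⊤ : Ideal (TruncatedWittVector p 2 k)) ⊗[TruncatedWittVector p 2 k]
          (WittPair A),
          (LinearMap.rTensor (WittPair A) s)
            ((LinearMap.rTensor (WittPair A) (Submodule.subtype ⊤)) u) = u := by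
        intro u
        rw [← LinearMap.comp_apply, ← LinearMap.rTensor_comp, hss, LinearMap.rTensor_id,
          LinearMap.id_apply]
      intro a b hab
      rw [← hkey a, ← hkey b, hab]
    · push_neg at hcase1
      by_cases hcase2 : ∃ x ∈ I, x.coeff 1 ≠ 0
      · -- I = span {p}
        obtain ⟨x, hxI, hx1⟩ := hcase2
        have hIp : I = Ideal.span {(p : TruncatedWittVector p 2 k)} := by
          apply le_antisymm
          · intro y hy
            rw [Ideal.mem_span_singleton']
            refine ⟨TruncatedWittVector.mk p ![r (y.coeff 1), 0], ?_⟩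
            refine t_ext p ?_ ?_
            · rw [t_mul0, TruncatedWittVector.coeff_mk, hpR0, mul_zero, hcase1 y hy]
            · rw [t_mul1, TruncatedWittVector.coeff_mk, TruncatedWittVector.coeff_mk,
                hpR0, hpR1, hp0k]
              simp only [Matrix.cons_val_zero, Matrix.cons_val_one, Matrix.head_cons]
              rw [hpow_r]
              ring
          · rw [Ideal.span_le, Set.singleton_subset_iff]
            have hx : (p : TruncatedWittVector p 2 k)
                = x * TruncatedWittVector.mk p ![r (x.coeff 1)⁻¹, 0] := by
              refine t_ext p ?_ ?_
              · rw [t_mul0, TruncatedWittVector.coeff_mk, hpR0, hcase1 x hxI]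
                simp
              · rw [t_mul1, TruncatedWittVector.coeff_mk, TruncatedWittVector.coeff_mk,
                  hpR1, hp0k]
                simp only [Matrix.cons_val_zero, Matrix.cons_val_one, Matrix.head_cons]
                rw [hpow_r, hcase1 x hxI]
                field_simp
                simp
            rw [hx]
            exact Ideal.mul_mem_right _ I hxI
        rw [hIp]
        have hpJ : (p : TruncatedWittVector p 2 k)
            ∈ Ideal.span {(p : TruncatedWittVector p 2 k)} :=
          Ideal.mem_span_singleton_self _
        set q : Ideal.span {(p : TruncatedWittVector p 2 k)} :=
          (⟨(p : TruncatedWittVector p 2 k), hpJ⟩ :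
            Ideal.span {(p : TruncatedWittVector p 2 k)}) with hq
        have hsurj : ∀ z : (Ideal.span {(p : TruncatedWittVector p 2 k)})
            ⊗[TruncatedWittVector p 2 k] (WittPair A),
            ∃ m : WittPair A, q ⊗ₜ[TruncatedWittVector p 2 k] m = z := by
          intro z
          induction z using TensorProduct.induction_on with
          | zero => exact ⟨0, TensorProduct.tmul_zero _ _⟩
          | tmul i m =>
            obtain ⟨c, hc⟩ := Ideal.mem_span_singleton'.mp i.2
            refine ⟨c • m, ?_⟩
            rw [TensorProduct.tmul_smul, TensorProduct.smul_tmul']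
            congr 1
            apply Subtype.ext
            simp only [SetLike.val_smul, smul_eq_mul]
            show c * (p : TruncatedWittVector p 2 k) = (i : TruncatedWittVector p 2 k)
            exact hc
          | add z1 z2 ih1 ih2 =>
            obtain ⟨m1, rfl⟩ := ih1
            obtain ⟨m2, rfl⟩ := ih2
            exact ⟨m1 + m2, TensorProduct.tmul_add _ _ _⟩
        rw [injective_iff_map_eq_zero]
        intro z hz
        obtain ⟨m, rfl⟩ := hsurj z
        rw [LinearMap.rTensor_tmul] at hz
        have hz' : (p : TruncatedWittVector p 2 k) • m = 0 := by
          have h1 := congrArg (TensorProduct.lid (TruncatedWittVector p 2 k) (WittPair A)) hz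
          rwa [map_zero, TensorProduct.lid_tmul] at h1
        rw [hpsmul m, Wzero] at hz'
        have hm0 : m.fst = 0 := congrArg WittPair.snd hz'
        have hm : m = (p : TruncatedWittVector p 2 k) • (⟨m.snd, 0⟩ : WittPair A) := by
          rw [hpsmul]
          show m = ⟨0, m.snd⟩
          conv_lhs => rw [show m = ⟨m.fst, m.snd⟩ from rfl]
          rw [hm0]
        rw [hm, TensorProduct.tmul_smul, TensorProduct.smul_tmul']
        have hq0 : (p : TruncatedWittVector p 2 k) • q = 0 := by
          apply Subtype.ext
          show (p : TruncatedWittVector p 2 k) • (p : TruncatedWittVector p 2 k) = 0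
          rw [smul_eq_mul, hpsq]
        rw [hq0, TensorProduct.zero_tmul]
      · -- I = ⊥
        push_neg at hcase2
        have hIb : I = ⊥ := by
          rw [eq_bot_iff]
          intro y hy
          rw [Ideal.mem_bot]
          exact t_ext p
            (by rw [hcase1 y hy, TruncatedWittVector.coeff_zero])
            (by rw [hcase2 y hy, TruncatedWittVector.coeff_zero])
        rw [hIb]
        have hz : ∀ z : (⊥ : Ideal (TruncatedWittVector p 2 k))
            ⊗[TruncatedWittVector p 2 k] (WittPair A), z = 0 := by
          intro z
          induction z using TensorProduct.induction_on with
          | zero => rfl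
          | tmul i m =>
            obtain ⟨i, hi⟩ := i
            rw [Ideal.mem_bot] at hi
            subst hi
            rw [show (⟨(0 : TruncatedWittVector p 2 k), by simp⟩ :
                (⊥ : Ideal (TruncatedWittVector p 2 k))) = 0 from rfl,
              TensorProduct.zero_tmul]
          | add z1 z2 ih1 ih2 => rw [ih1, ih2, add_zero]
        intro a b _
        rw [hz a, hz b]
  · -- the projection π
    refine ⟨{ toFun := WittPair.fst
              map_one' := by rw [hone]
              map_mul' := fun x y => congrArg WittPair.fst (hmul x y)
              map_zero' := by rw [Wzero]
              map_add' := fun x y => congrArg WittPair.fst (hadd x y) }, fun x => rfl, ?_⟩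
    ext x
    constructor
    · intro hx
      have hx0 : x.fst = 0 := hx
      rw [Ideal.mem_span_singleton']
      refine ⟨⟨x.snd, 0⟩, ?_⟩
      rw [hpW, hmul]
      show (⟨x.snd * 0, x.snd * 1 + 0 * 0⟩ : WittPair A) = x
      rw [mul_zero, mul_one, zero_mul, add_zero]
      conv_rhs => rw [show x = ⟨x.fst, x.snd⟩ from rfl]
      rw [hx0]
    · intro hx
      rw [Ideal.mem_span_singleton'] at hx
      obtain ⟨c, rfl⟩ := hx
      show (c * (p : WittPair A)).fst = 0
      rw [hpW, hmul]
      show c.fst * 0 = 0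
      rw [mul_zero]
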